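/- Let V be a finite-dimensional real inner product space and let I, J be complex structures on V compatible with the inner product with I ∘ J + J ∘ I = 2p·id for a real number p with |p| < 1. Let ξ be a linear functional on V and define the linear functional θ := (1/(2(p² − 1)))·(ξ ∘ [I,J]). Then, with respect to the inner product induced on the dual space V*, one has ⟨ξ, θ⟩ = 0 and ‖θ‖² = ‖ξ‖²/(1 − p²). -/

import Mathlib

open scoped InnerProductSpace

private lemma ringlem {R : Type*} [Ring R] [Algebra ℝ R] (a b : R) (p : ℝ)
    (ha : a * a = -1) (hb : b * b = -1)
    (hab : a * b + b * a = (2*p) • (1 : R)) :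
    (a*b - b*a) * (a*b - b*a) = (4*(p^2-1)) • (1 : R) := by
  have h1 : a*b*(b*a) = 1 := by
    have h : a*b*(b*a) = a*(b*b)*a := by noncomm_ring
    rw [h, hb]
    have h : a * (-1 : R) * a = -(a*a) := by noncomm_ring
    rw [h, ha]; simp
  have h2 : b*a*(a*b) = 1 := by
    have h : b*a*(a*b) = b*(a*a)*b := by noncomm_ring
    rw [h, ha]
    have h : b * (-1 : R) * b = -(b*b) := by noncomm_ring
    rw [h, hb]; simp
  have hid : (a*b - b*a) * (a*b - b*a)
      = (a*b + b*a) * (a*b + b*a) - 2*(a*b*(b*a) + b*a*(a*b)) := by noncomm_ring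
  rw [hid, hab, h1, h2, smul_mul_smul_comm]
  have h : ((2*p) * (2*p)) • ((1:R)*1) = (4*p^2) • (1:R) := by rw [mul_one]; ring_nf
  rw [h]
  have h4 : (2:R)*(1+1) = (4:ℝ) • (1:R) := by
    norm_num
    rw [show ((4:ℝ) • (1:R)) = algebraMap ℝ R 4 by simp [Algebra.algebraMap_eq_smul_one]]
    simp [map_ofNat]
  rw [h4, ← sub_smul]
  ring_nf



/-- For compatible complex structures `I`, `J` on a
finite-dimensional real inner product space with `I∘J + J∘I = 2p·id`,
`|p| < 1`, and a linear functional `ξ`, the functional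
`θ = (1/(2(p² - 1)))·(ξ ∘ [I,J])` satisfies `⟨ξ, θ⟩ = 0` (in the inner
product induced on the dual via Riesz representation) and
`‖θ‖² = ‖ξ‖²/(1 - p²)`. -/
theorem stmt_4 {V : Type*} [NormedAddCommGroup V] [InnerProductSpace ℝ V]
    [FiniteDimensional ℝ V]
    (I J : V →L[ℝ] V) (p : ℝ) (hp : |p| < 1)
    (hI2 : I ∘L I = -1) (hJ2 : J ∘L J = -1)
    (hIc : ∀ x y : V, ⟪I x, I y⟫_ℝ = ⟪x, y⟫_ℝ)
    (hJc : ∀ x y : V, ⟪J x, J y⟫_ℝ = ⟪x, y⟫_ℝ)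
    (hanti : I ∘L J + J ∘L I = (2 * p) • (1 : V →L[ℝ] V))
    (ξ θ : V →L[ℝ] ℝ)
    (hθ : θ = (1 / (2 * (p ^ 2 - 1))) • (ξ.comp (I ∘L J - J ∘L I))) :
    ⟪(InnerProductSpace.toDual ℝ V).symm ξ, (InnerProductSpace.toDual ℝ V).symm θ⟫_ℝ = 0 ∧
      ‖θ‖ ^ 2 = ‖ξ‖ ^ 2 / (1 - p ^ 2) := by
  set c : ℝ := 1 / (2 * (p ^ 2 - 1)) with hc
  set A : V →L[ℝ] V := I ∘L J - J ∘L I with hA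
  -- operator identity A ∘ A = 4(p²-1) id
  have hAA : A ∘L A = (4*(p^2-1)) • (1 : V →L[ℝ] V) := by
    have := ringlem I J p hI2 hJ2 hanti
    exact this
  -- pointwise squares
  have hIx : ∀ x, I (I x) = -x := by
    intro x
    have := ContinuousLinearMap.ext_iff.mp hI2 x
    simpa using this
  have hJx : ∀ x, J (J x) = -x := by
    intro x
    have := ContinuousLinearMap.ext_iff.mp hJ2 x
    simpa using this
  have skewI : ∀ x y : V, ⟪x, I y⟫_ℝ = -⟪I x, y⟫_ℝ := by
    intro x y
    rw [← hIc x (I y), hIx, inner_neg_right]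
  have skewJ : ∀ x y : V, ⟪x, J y⟫_ℝ = -⟪J x, y⟫_ℝ := by
    intro x y
    rw [← hJc x (J y), hJx, inner_neg_right]
  have hAapp : ∀ x, A x = I (J x) - J (I x) := by intro x; simp [hA]
  have skewA : ∀ x y : V, ⟪x, A y⟫_ℝ = -⟪A x, y⟫_ℝ := by
    intro x y
    rw [hAapp, hAapp, inner_sub_right, inner_sub_left]
    rw [skewI x (J y), skewJ x (I y), skewJ (I x) y, skewI (J x) y]
    ring
  set v := (InnerProductSpace.toDual ℝ V).symm ξ with hv
  have hvx : ∀ x, ⟪v, x⟫_ℝ = ξ x := fun x => InnerProductSpace.toDual_symm_apply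
  -- Riesz vector of θ
  have hw : (InnerProductSpace.toDual ℝ V).symm θ = (-c) • A v := by
    apply ext_inner_right ℝ
    intro x
    have hx : ⟪A v, x⟫_ℝ = -⟪v, A x⟫_ℝ := by rw [skewA v x]; ring
    rw [InnerProductSpace.toDual_symm_apply, real_inner_smul_left, hx, hvx, hθ]
    simp only [ContinuousLinearMap.smul_apply, ContinuousLinearMap.comp_apply,
      smul_eq_mul]
    ring
  have hvAv : ⟪v, A v⟫_ℝ = 0 := by
    rw [hAapp, inner_sub_right, skewI v (J v), skewJ v (I v),
      real_inner_comm (J v) (I v)]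
    ring
  constructor
  · rw [hw, real_inner_smul_right, hvAv]; ring
  · have hθn : ‖θ‖ = ‖(-c) • A v‖ := by
      rw [← hw, LinearIsometryEquiv.norm_map]
    have hξn : ‖ξ‖ = ‖v‖ := by rw [hv, LinearIsometryEquiv.norm_map]
    have hAvAv : ⟪A v, A v⟫_ℝ = (4*(1-p^2)) * ⟪v, v⟫_ℝ := by
      rw [skewA (A v) v]
      have : A (A v) = (4*(p^2-1)) • v := by
        have := ContinuousLinearMap.ext_iff.mp hAA v
        simpa using this
      rw [this, real_inner_smul_left]
      ring
    have hp2 : 1 - p^2 > 0 := by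
      have := abs_lt.mp hp
      nlinarith [this.1, this.2]
    have hsq : ‖(-c) • A v‖^2 = c^2 * (4*(1-p^2)) * ‖v‖^2 := by
      rw [norm_smul, mul_pow, norm_neg, Real.norm_eq_abs, sq_abs,
        ← real_inner_self_eq_norm_sq (A v), hAvAv, real_inner_self_eq_norm_sq]
      ring
    rw [hθn, hξn, hsq, hc]
    have h2 : (2 * (p^2 - 1)) ≠ 0 := by nlinarith
    have h3 : p^2 - 1 ≠ 0 := by nlinarith
    have h4 : 1 - p^2 ≠ 0 := by linarith
    field_simp
    ring
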